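/- Let U be an F_q-subspace of F_{q^n}, V ⊆ U a subspace of dimension ℓ equal to the maximum intersection dimension of Orb(U), and α ∈ F_{q^n}^* with V ⊆ U ∩ αU. Then for every λ ∈ F_q, V ⊆ U ∩ φ(α,λ)U, where φ(α,λ) = α/(1+λα). -/

import Mathlib

/-- If `V ⊆ U` has dimension `ℓ` equal to the maximum intersection dimension of
`Orb(U)` and `V ⊆ U ∩ αU`, then `V ⊆ U ∩ φ(α,λ)U` for every `λ ∈ F_q`, where
`φ(α,λ) = α/(1+λα)`. -/
theorem stmt_14 (F K : Type) [Field F] [Field K] [Algebra F K]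
    [Fintype F] [Fintype K] (q n k l : ℕ)
    (hq : Fintype.card F = q) (hn : Module.finrank F K = n)
    (U : Submodule F K) (hk : Module.finrank F U = k)
    (V : Submodule F K) (hVU : V ≤ U) (hV : Module.finrank F V = l)
    (hmax : ∀ β : K, β ≠ 0 → Submodule.map (LinearMap.mulLeft F β) U ≠ U →
      Module.finrank F ↥(U ⊓ Submodule.map (LinearMap.mulLeft F β) U) ≤ l)
    (α : K) (hα : α ∉ Set.range (algebraMap F K))
    (hVint : V ≤ U ⊓ Submodule.map (LinearMap.mulLeft F α) U) :
    ∀ c : F, V ≤ U ⊓ Submodule.map (LinearMap.mulLeft F (α / (1 + c • α))) U := by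
  intro c x hx
  have hxU : x ∈ U := hVU hx
  obtain ⟨-, hmap⟩ := Submodule.mem_inf.mp (hVint hx)
  obtain ⟨u, hu, huv⟩ := hmap
  simp only [LinearMap.mulLeft_apply] at huv
  have hden : (1 : K) + c • α ≠ 0 := by
    intro h0
    rcases eq_or_ne c 0 with rfl | hc
    · simp at h0
    · apply hα
      refine ⟨-c⁻¹, ?_⟩
      have : c • α = algebraMap F K c * α := by
        rw [Algebra.smul_def]
      rw [map_neg, map_inv₀]
      have hc' : algebraMap F K c ≠ 0 := by
        simpa using hc
      field_simp
      rw [this] at h0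
      linear_combination -h0
  refine Submodule.mem_inf.mpr ⟨hxU, ⟨u + c • x, U.add_mem hu (U.smul_mem c hxU), ?_⟩⟩
  simp only [LinearMap.mulLeft_apply, Algebra.smul_def] at *
  have hden' : 1 + α * algebraMap F K c ≠ 0 := by rwa [mul_comm] at hden
  field_simp
  linear_combination huv
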